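/- Let K be a field and let P, Q be polynomials over K with natDegree P ≥ 1 and natDegree Q ≥ 1. Then the resultant Res(P, Q) equals 0 if and only if P and Q have a common divisor of degree at least 1, i.e. there exists a polynomial D with 1 ≤ natDegree D, D ∣ P and D ∣ Q. -/

import Mathlib

open Polynomial
open Finset

/-- The Sylvester matrix of two polynomials `P` and `Q` over a commutative ring:
a square matrix of size `natDegree P + natDegree Q` whose first `natDegree Q` rows
are the coefficient vectors of `X ^ i * P` (for `0 ≤ i < natDegree Q`) and whose
remaining rows are the coefficient vectors of `X ^ i * Q` (for `0 ≤ i < natDegree P`). -/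
noncomputable def sylvesterMatrix {R : Type*} [CommRing R] (P Q : Polynomial R) :
    Matrix (Fin (P.natDegree + Q.natDegree)) (Fin (P.natDegree + Q.natDegree)) R :=
  fun i j =>
    if (i : ℕ) < Q.natDegree then (X ^ (i : ℕ) * P).coeff j
    else (X ^ ((i : ℕ) - Q.natDegree) * Q).coeff j

/-- The resultant of two polynomials: the determinant of their Sylvester matrix. -/
noncomputable def resultant {R : Type*} [CommRing R] (P Q : Polynomial R) : R :=
  (sylvesterMatrix P Q).det

/-- Over a field, the resultant of two polynomials of degree at least one vanishes
if and only if they have a common divisor of degree at least one. -/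
lemma coeff_mul_as_sum {K : Type*} [Field K] (A R : Polynomial K) (n : ℕ)
    (hA : A.natDegree < n) (j : ℕ) :
    (A * R).coeff j = ∑ i ∈ range n, A.coeff i * (X ^ i * R).coeff j := by
  conv_lhs => rw [A.as_sum_range' n hA]
  rw [Finset.sum_mul, finset_sum_coeff]
  refine Finset.sum_congr rfl fun i _ => ?_
  rw [← C_mul_X_pow_eq_monomial, mul_assoc, coeff_C_mul]

lemma vecMul_sylvester {K : Type*} [Field K] (P Q A B : Polynomial K)
    (hA : A.natDegree < Q.natDegree) (hB : B.natDegree < P.natDegree)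
    (j : Fin (P.natDegree + Q.natDegree)) :
    Matrix.vecMul
      (fun i : Fin (P.natDegree + Q.natDegree) =>
        if (i : ℕ) < Q.natDegree then A.coeff i else B.coeff ((i : ℕ) - Q.natDegree))
      (sylvesterMatrix P Q) j = (A * P + B * Q).coeff j := by
  rw [Matrix.vecMul, dotProduct]
  have : ∀ i : Fin (P.natDegree + Q.natDegree),
      (if (i:ℕ) < Q.natDegree then A.coeff i else B.coeff ((i:ℕ) - Q.natDegree)) *
        sylvesterMatrix P Q i j =
      (fun i : ℕ =>
        (if i < Q.natDegree then A.coeff i else B.coeff (i - Q.natDegree)) *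
        (if i < Q.natDegree then (X ^ i * P).coeff j
         else (X ^ (i - Q.natDegree) * Q).coeff j)) i := by
    intro i
    by_cases h : (i:ℕ) < Q.natDegree <;> simp [sylvesterMatrix, h]
  rw [Finset.sum_congr rfl fun i _ => this i]
  refine (Fin.sum_univ_eq_sum_range (fun i : ℕ =>
    (if i < Q.natDegree then A.coeff i else B.coeff (i - Q.natDegree)) *
    (if i < Q.natDegree then (X ^ i * P).coeff j else (X ^ (i - Q.natDegree) * Q).coeff j))
    (P.natDegree + Q.natDegree)).trans ?_
  generalize (j : ℕ) = k
  rw [add_comm P.natDegree Q.natDegree, Finset.sum_range_add, coeff_add,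
      coeff_mul_as_sum A P Q.natDegree hA, coeff_mul_as_sum B Q P.natDegree hB]
  congr 1
  · exact Finset.sum_congr rfl fun i hi => by
      simp [Finset.mem_range.mp hi]
  · exact Finset.sum_congr rfl fun i hi => by simp

theorem resultant_eq_zero_iff_common_factor {K : Type*} [Field K]
    (P Q : Polynomial K) (hP : 1 ≤ P.natDegree) (hQ : 1 ≤ Q.natDegree) :
    _root_.resultant P Q = 0 ↔ ∃ D : Polynomial K, 1 ≤ D.natDegree ∧ D ∣ P ∧ D ∣ Q := by
  have hP0 : P ≠ 0 := fun h => by simp [h] at hP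
  have hQ0 : Q ≠ 0 := fun h => by simp [h] at hQ
  set m := P.natDegree with hm
  set n := Q.natDegree with hn
  rw [_root_.resultant, ← Matrix.exists_vecMul_eq_zero_iff]
  constructor
  · rintro ⟨v, hv, hvS⟩
    set w : ℕ → K := fun i => if h : i < m + n then v ⟨i, h⟩ else 0 with hw
    set A : Polynomial K := ∑ i ∈ range n, monomial i (w i) with hAdef
    set B : Polynomial K := ∑ i ∈ range m, monomial i (w (n + i)) with hBdef
    have hcoeffA : ∀ i, i < n → A.coeff i = w i := by
      intro i hi
      simp [hAdef, finset_sum_coeff, coeff_monomial, hi]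
    have hcoeffB : ∀ i, i < m → B.coeff i = w (n + i) := by
      intro i hi
      simp [hBdef, finset_sum_coeff, coeff_monomial, hi]
    have hdA : A.natDegree < n := by
      have h1 : A.natDegree ≤ n - 1 := natDegree_sum_le_of_forall_le _ _
        (fun i hi => le_trans (natDegree_monomial_le _) (by
          have := Finset.mem_range.mp hi; omega))
      omega
    have hdB : B.natDegree < m := by
      have h1 : B.natDegree ≤ m - 1 := natDegree_sum_le_of_forall_le _ _
        (fun i hi => le_trans (natDegree_monomial_le _) (by
          have := Finset.mem_range.mp hi; omega))
      omega
    have hveq : v = fun i : Fin (m + n) =>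
        if (i : ℕ) < n then A.coeff i else B.coeff ((i : ℕ) - n) := by
      funext i
      by_cases h : (i : ℕ) < n
      · simp [h, hcoeffA _ h, hw, (show (i : ℕ) < m + n from i.isLt)]
      · have h2 : (i : ℕ) - n < m := by have := i.isLt; omega
        have h3 : n + ((i : ℕ) - n) = (i : ℕ) := by omega
        simp only [h, if_false, hcoeffB _ h2, h3, hw, (show (i : ℕ) < m + n from i.isLt), dif_pos]
    have hzero : A * P + B * Q = 0 := by
      have hdeg : (A * P + B * Q).natDegree < m + n := by
        refine lt_of_le_of_lt (natDegree_add_le _ _) (max_lt ?_ ?_)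
        · exact lt_of_le_of_lt (natDegree_mul_le) (by omega)
        · exact lt_of_le_of_lt (natDegree_mul_le) (by omega)
      ext k
      rcases lt_or_ge k (m + n) with hk | hk
      · have := congrFun hvS ⟨k, hk⟩
        rw [hveq] at this
        rw [vecMul_sylvester P Q A B hdA hdB ⟨k, hk⟩] at this
        simpa using this
      · simp [coeff_eq_zero_of_natDegree_lt (lt_of_lt_of_le hdeg hk)]
    have hAB : A ≠ 0 ∨ B ≠ 0 := by
      by_contra h
      push_neg at h
      apply hv
      funext i
      rw [hveq]
      simp [h.1, h.2]
    have hB0 : B ≠ 0 := by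
      intro h
      rw [h, zero_mul, add_zero] at hzero
      rcases mul_eq_zero.mp hzero with h' | h'
      · exact hAB.elim (fun h2 => h2 h') (fun h2 => h2 h)
      · exact hP0 h'
    classical
    refine ⟨EuclideanDomain.gcd P Q, ?_, EuclideanDomain.gcd_dvd_left P Q,
      EuclideanDomain.gcd_dvd_right P Q⟩
    by_contra hg
    push_neg at hg
    have hg0 : EuclideanDomain.gcd P Q ≠ 0 := fun h =>
      hP0 (EuclideanDomain.gcd_eq_zero_iff.mp h).1
    have hgu : IsUnit (EuclideanDomain.gcd P Q) := by
      rw [Polynomial.isUnit_iff_degree_eq_zero, degree_eq_natDegree hg0]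
      norm_cast
      omega
    have hcop : IsCoprime P Q := EuclideanDomain.gcd_isUnit_iff.mp hgu
    have hdvd : P ∣ B * Q := ⟨-A, by linear_combination hzero⟩
    have := Polynomial.natDegree_le_of_dvd (hcop.dvd_of_dvd_mul_right hdvd) hB0
    omega
  · rintro ⟨D, hD, ⟨P₁, hP₁⟩, ⟨Q₁, hQ₁⟩⟩
    have hD0 : D ≠ 0 := fun h => hP0 (by rw [hP₁, h, zero_mul])
    have hP₁0 : P₁ ≠ 0 := fun h => hP0 (by rw [hP₁, h, mul_zero])
    have hQ₁0 : Q₁ ≠ 0 := fun h => hQ0 (by rw [hQ₁, h, mul_zero])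
    have hdQ₁ : Q₁.natDegree < n := by
      have : n = D.natDegree + Q₁.natDegree := by
        rw [hn, hQ₁, Polynomial.natDegree_mul hD0 hQ₁0]
      omega
    have hdP₁ : (-P₁).natDegree < m := by
      have : m = D.natDegree + P₁.natDegree := by
        rw [hm, hP₁, Polynomial.natDegree_mul hD0 hP₁0]
      rw [natDegree_neg]
      omega
    have hzero : Q₁ * P + (-P₁) * Q = 0 := by
      rw [hP₁, hQ₁]; ring
    refine ⟨fun i : Fin (m + n) =>
      if (i : ℕ) < n then Q₁.coeff i else (-P₁).coeff ((i : ℕ) - n), ?_, ?_⟩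
    · intro h0
      have hlt : Q₁.natDegree < m + n := by omega
      have := congrFun h0 ⟨Q₁.natDegree, hlt⟩
      simp only [hdQ₁, if_pos, Pi.zero_apply] at this
      exact hQ₁0 (leadingCoeff_eq_zero.mp this)
    · funext j
      rw [vecMul_sylvester P Q Q₁ (-P₁) hdQ₁ hdP₁ j, hzero]
      simp
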